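/- arXiv:2007.01858 — 2 statements merged into one kernel-verified Lean document; each statement's English description precedes it below -/
import Mathlib

section
/- Assume that E ⊥ Tⁿ E and E ⊥ T'ⁿ E for every integer n ≥ 1 (i.e. ⟨e, Tⁿ e'⟩ = 0 = ⟨e, T'ⁿ e'⟩ for all e, e' ∈ E and n ≥ 1), and that the linear span of {T'*ⁿ e : n ∈ ℕ, e ∈ E} ∪ {Tⁿ e : n ∈ ℕ, e ∈ E} is dense in H. Then the linear subspace {x ∈ H : limsup_{n→∞} ‖P_E T'*ⁿ x‖^{1/n} = 0} is dense in H. -/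
open ContinuousLinearMap

/-- Orthogonal projection onto the closed subspace `E`, as an operator `H →L[ℂ] H`. -/
noncomputable def PE {H : Type*} [NormedAddCommGroup H] [InnerProductSpace ℂ H]
    (E : Submodule ℂ H) [CompleteSpace E] : H →L[ℂ] H :=
  E.subtypeL.comp (E.orthogonalProjectionOnto)

/- STATEMENT 15: Assume E ⊥ Tⁿ E and E ⊥ T'ⁿ E for all n ≥ 1, and that the span of
{T'*ⁿ e : n ∈ ℕ, e ∈ E} ∪ {Tⁿ e : n ∈ ℕ, e ∈ E} is dense in H.  Then the linear
subspace {x ∈ H : limsup ‖P_E T'*ⁿ x‖^{1/n} = 0} is dense in H. -/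
theorem stmt_15 {H : Type*} [NormedAddCommGroup H] [InnerProductSpace ℂ H] [CompleteSpace H]
    (T T' W : H →L[ℂ] H)
    (hleft : ∃ S : H →L[ℂ] H, S.comp T = ContinuousLinearMap.id ℂ H)
    (hW1 : W.comp ((ContinuousLinearMap.adjoint T).comp T) = ContinuousLinearMap.id ℂ H)
    (hW2 : ((ContinuousLinearMap.adjoint T).comp T).comp W = ContinuousLinearMap.id ℂ H)
    (hT' : T' = T.comp W)
    (E : Submodule ℂ H) [CompleteSpace E]
    (horth : ∀ n : ℕ, 1 ≤ n → ∀ e ∈ E, ∀ e' ∈ E,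
      (inner ℂ e ((T ^ n) e') : ℂ) = 0 ∧ (inner ℂ e ((T' ^ n) e') : ℂ) = 0)
    (hdense : Dense (↑(Submodule.span ℂ
        ({y : H | ∃ (n : ℕ), ∃ e ∈ E, y = ((ContinuousLinearMap.adjoint T') ^ n) e} ∪
         {y : H | ∃ (n : ℕ), ∃ e ∈ E, y = (T ^ n) e})) : Set H)) :
    Dense {x : H | Filter.limsup
      (fun n : ℕ => ‖PE E (((ContinuousLinearMap.adjoint T') ^ n) x)‖ ^ (1 / (n : ℝ)))
      Filter.atTop = 0} := by
  classical
  set A := (ContinuousLinearMap.adjoint T).comp T with hA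
  have hAadj : ContinuousLinearMap.adjoint A = A := by
    rw [hA, ContinuousLinearMap.adjoint_comp, ContinuousLinearMap.adjoint_adjoint]
  -- W is self-adjoint
  have hWadj : ContinuousLinearMap.adjoint W = W := by
    have h1 : A.comp (ContinuousLinearMap.adjoint W) = ContinuousLinearMap.id ℂ H := by
      have := congrArg ContinuousLinearMap.adjoint hW1
      rwa [ContinuousLinearMap.adjoint_comp, hAadj, ContinuousLinearMap.adjoint_id] at this
    have h2 := congrArg (fun X => W.comp X) h1
    have := h2
    simp only [← ContinuousLinearMap.comp_assoc, hW1, ContinuousLinearMap.id_comp,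
      ContinuousLinearMap.comp_id] at this
    exact this
  -- key relation : T'* ∘ T = id
  have hkey : (ContinuousLinearMap.adjoint T') * T = 1 := by
    rw [hT', ContinuousLinearMap.adjoint_comp, hWadj]
    show (W.comp (ContinuousLinearMap.adjoint T)).comp T = ContinuousLinearMap.id ℂ H
    rw [ContinuousLinearMap.comp_assoc]
    exact hW1
  have hpow1 : ∀ m : ℕ, (ContinuousLinearMap.adjoint T') ^ m * T ^ m = 1 := by
    intro m
    induction m with
    | zero => simp
    | succ k ih =>
      rw [pow_succ, pow_succ']
      calc (ContinuousLinearMap.adjoint T') ^ k * ContinuousLinearMap.adjoint T' * (T * T ^ k)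
          = (ContinuousLinearMap.adjoint T') ^ k *
              ((ContinuousLinearMap.adjoint T' * T) * T ^ k) := by
            rw [mul_assoc, ← mul_assoc (ContinuousLinearMap.adjoint T') T]
        _ = 1 := by rw [hkey]; simpa using ih
  have hpow2 : ∀ n m : ℕ, m ≤ n →
      (ContinuousLinearMap.adjoint T') ^ n * T ^ m =
        (ContinuousLinearMap.adjoint T') ^ (n - m) := by
    intro n m hmn
    have : n = (n - m) + m := (Nat.sub_add_cancel hmn).symm
    rw [this, pow_add, mul_assoc, hpow1, mul_one, Nat.add_sub_cancel]
  -- projection of T'*^k e is zero for k ≥ 1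
  have hproj : ∀ k : ℕ, 1 ≤ k → ∀ e ∈ E,
      PE E (((ContinuousLinearMap.adjoint T') ^ k) e) = 0 := by
    intro k hk e he
    have hmem : ((ContinuousLinearMap.adjoint T') ^ k) e ∈ Eᗮ := by
      rw [Submodule.mem_orthogonal']
      intro u hu
      have hadj : (ContinuousLinearMap.adjoint T') ^ k =
          ContinuousLinearMap.adjoint (T' ^ k) := by
        simp [← ContinuousLinearMap.star_eq_adjoint, star_pow]
      rw [hadj, ContinuousLinearMap.adjoint_inner_left]
      exact (horth k hk e he u hu).2
    simp only [PE, ContinuousLinearMap.comp_apply, Submodule.orthogonalProjectionOnto_apply_of_mem_orthogonal hmem, map_zero]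
  -- the submodule of eventually-vanishing orbits
  let Z : Submodule ℂ H :=
    { carrier := {x | ∀ᶠ n in Filter.atTop,
        PE E (((ContinuousLinearMap.adjoint T') ^ n) x) = 0}
      add_mem' := by
        intro a b ha hb
        filter_upwards [ha, hb] with n h1 h2
        rw [map_add, map_add, h1, h2, add_zero]
      zero_mem' := by
        filter_upwards with n
        simp
      smul_mem' := by
        intro c a ha
        filter_upwards [ha] with n h
        rw [map_smul, map_smul, h, smul_zero] }
  have hgen : ({y : H | ∃ (n : ℕ), ∃ e ∈ E, y = ((ContinuousLinearMap.adjoint T') ^ n) e} ∪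
         {y : H | ∃ (n : ℕ), ∃ e ∈ E, y = (T ^ n) e}) ⊆ (Z : Set H) := by
    rintro y (⟨m, e, he, rfl⟩ | ⟨m, e, he, rfl⟩)
    · filter_upwards [Filter.eventually_ge_atTop 1] with n hn
      have : ((ContinuousLinearMap.adjoint T') ^ n)
          (((ContinuousLinearMap.adjoint T') ^ m) e) =
          ((ContinuousLinearMap.adjoint T') ^ (n + m)) e := by
        rw [pow_add, ContinuousLinearMap.mul_apply]
      rw [this]
      exact hproj (n + m) (le_trans hn (Nat.le_add_right n m)) e he
    · filter_upwards [Filter.eventually_ge_atTop (m + 1)] with n hn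
      have hmn : m ≤ n := le_trans (Nat.le_succ m) hn
      have : ((ContinuousLinearMap.adjoint T') ^ n) ((T ^ m) e) =
          ((ContinuousLinearMap.adjoint T') ^ (n - m)) e := by
        rw [← ContinuousLinearMap.mul_apply, hpow2 n m hmn]
      rw [this]
      have h1 : 1 ≤ n - m := Nat.le_sub_of_add_le (by omega)
      exact hproj (n - m) h1 e he
  have hspan : (Submodule.span ℂ
        ({y : H | ∃ (n : ℕ), ∃ e ∈ E, y = ((ContinuousLinearMap.adjoint T') ^ n) e} ∪
         {y : H | ∃ (n : ℕ), ∃ e ∈ E, y = (T ^ n) e})) ≤ Z :=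
    Submodule.span_le.mpr hgen
  apply hdense.mono
  intro x hx
  have hxZ : ∀ᶠ n in Filter.atTop,
      PE E (((ContinuousLinearMap.adjoint T') ^ n) x) = 0 := hspan hx
  have hev : ∀ᶠ (n : ℕ) in Filter.atTop,
      ‖PE E (((ContinuousLinearMap.adjoint T') ^ n) x)‖ ^ (1 / (n : ℝ)) = (0 : ℝ) := by
    filter_upwards [hxZ, Filter.eventually_ge_atTop 1] with (n : ℕ) h1 h2
    rw [h1, norm_zero, Real.zero_rpow]
    have : (0 : ℝ) < (n : ℝ) := by exact_mod_cast h2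
    positivity
  show Filter.limsup _ Filter.atTop = 0
  rw [Filter.limsup_congr hev, Filter.limsup_const]
end

section
/- Assume that E ⊥ Tⁿ E and E ⊥ T'ⁿ E for every integer n ≥ 1 (i.e. ⟨e, Tⁿ e'⟩ = 0 = ⟨e, T'ⁿ e'⟩ for all e, e' ∈ E and n ≥ 1). Then for every e ∈ E and all m, n ∈ ℕ: P_E T'*ⁿ Tᵐ e = e if n = m, and P_E T'*ⁿ Tᵐ e = 0 if n ≠ m. -/
open ContinuousLinearMap

/- STATEMENT 16: Assume E ⊥ Tⁿ E and E ⊥ T'ⁿ E for all n ≥ 1.  Then for every e ∈ E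
and all m, n ∈ ℕ: P_E T'*ⁿ Tᵐ e = e if n = m, and = 0 if n ≠ m. -/
theorem stmt_16 {H : Type*} [NormedAddCommGroup H] [InnerProductSpace ℂ H] [CompleteSpace H]
    (T T' W : H →L[ℂ] H)
    (hleft : ∃ S : H →L[ℂ] H, S.comp T = ContinuousLinearMap.id ℂ H)
    (hW1 : W.comp ((ContinuousLinearMap.adjoint T).comp T) = ContinuousLinearMap.id ℂ H)
    (hW2 : ((ContinuousLinearMap.adjoint T).comp T).comp W = ContinuousLinearMap.id ℂ H)
    (hT' : T' = T.comp W)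
    (E : Submodule ℂ H) [CompleteSpace E]
    (horth : ∀ n : ℕ, 1 ≤ n → ∀ e ∈ E, ∀ e' ∈ E,
      (inner ℂ e ((T ^ n) e') : ℂ) = 0 ∧ (inner ℂ e ((T' ^ n) e') : ℂ) = 0) :
    ∀ e ∈ E, ∀ (n m : ℕ),
      PE E (((ContinuousLinearMap.adjoint T') ^ n) ((T ^ m) e)) =
        if n = m then e else 0 := by
  -- W is self-adjoint
  have hWsa : ContinuousLinearMap.adjoint W = W := by
    have h2 := congrArg ContinuousLinearMap.adjoint hW2
    rw [adjoint_comp, adjoint_comp, adjoint_adjoint, adjoint_id] at h2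
    -- h2 : (adjoint W).comp ((adjoint T).comp T) = id
    calc ContinuousLinearMap.adjoint W
        = ((ContinuousLinearMap.adjoint W).comp
            ((ContinuousLinearMap.adjoint T).comp T)).comp W := by
          rw [ContinuousLinearMap.comp_assoc, hW2, ContinuousLinearMap.comp_id]
      _ = W := by rw [h2, ContinuousLinearMap.id_comp]
  -- adjoint T' ∘ T = id
  have hA : (ContinuousLinearMap.adjoint T').comp T = ContinuousLinearMap.id ℂ H := by
    rw [hT', adjoint_comp, hWsa, ContinuousLinearMap.comp_assoc, hW1]
  have hAx : ∀ x : H, ContinuousLinearMap.adjoint T' (T x) = x := by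
    intro x
    have := congrArg (fun f : H →L[ℂ] H => f x) hA
    simpa using this
  -- (T'†)^m (T^m x) = x
  have key1 : ∀ (m : ℕ) (x : H),
      ((ContinuousLinearMap.adjoint T') ^ m) ((T ^ m) x) = x := by
    intro m
    induction m with
    | zero => intro x; simp
    | succ k ih =>
      intro x
      have h1 : (T ^ (k + 1)) x = (T ^ k) (T x) := by
        rw [pow_succ]; rfl
      have h2 : ((ContinuousLinearMap.adjoint T') ^ (k + 1)) ((T ^ k) (T x))
          = ContinuousLinearMap.adjoint T'
            (((ContinuousLinearMap.adjoint T') ^ k) ((T ^ k) (T x))) := by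
        rw [pow_succ']; rfl
      rw [h1, h2, ih (T x), hAx]
  have hPE0 : ∀ y : H, (∀ u ∈ E, (inner ℂ u y : ℂ) = 0) → PE E y = 0 := by
    intro y hy
    have hmem : y ∈ Eᗮ := (Submodule.mem_orthogonal E y).2 hy
    simp [PE, Submodule.orthogonalProjectionOnto_apply_of_mem_orthogonal hmem]
  have hPEe : ∀ y ∈ E, PE E y = y := by
    intro y hy
    simpa [PE] using Submodule.starProjection_eq_self_iff.2 hy
  intro e he n m
  rcases le_or_gt n m with hle | hlt
  · obtain ⟨k, rfl⟩ : ∃ k, m = n + k := ⟨m - n, (Nat.add_sub_cancel' hle).symm⟩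
    have hsplit : (T ^ (n + k)) e = (T ^ n) ((T ^ k) e) := by
      rw [pow_add]; rfl
    rw [hsplit, key1 n ((T ^ k) e)]
    rcases Nat.eq_zero_or_pos k with hk | hk
    · subst hk
      simp [hPEe e he]
    · have hne : n ≠ n + k := by omega
      rw [if_neg hne]
      exact hPE0 _ (fun u hu => (horth k hk u hu e he).1)
  · obtain ⟨k, hk1, rfl⟩ : ∃ k, 1 ≤ k ∧ n = k + m := ⟨n - m, by omega, by omega⟩
    have hsplit : ((ContinuousLinearMap.adjoint T') ^ (k + m)) ((T ^ m) e)
        = ((ContinuousLinearMap.adjoint T') ^ k)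
            (((ContinuousLinearMap.adjoint T') ^ m) ((T ^ m) e)) := by
      rw [pow_add]; rfl
    rw [hsplit, key1 m e]
    have hne : k + m ≠ m := by omega
    rw [if_neg hne]
    refine hPE0 _ (fun u hu => ?_)
    have hadj : ((ContinuousLinearMap.adjoint T') ^ k)
        = ContinuousLinearMap.adjoint (T' ^ k) := (star_pow T' k).symm
    rw [hadj, adjoint_inner_right, ← inner_conj_symm,
      (horth k hk1 e he u hu).2, map_zero]
end
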